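/- arXiv:1208.2726 — 2 statements merged into one kernel-verified Lean document; each statement's English description precedes it below -/
import Mathlib

section
/- Let E be a real Banach space, let κ > 0, T ≥ 0, and B ≥ 0. Suppose f : ℝ → E is differentiable at every point of [0, T] with derivative f'(t), that g : ℝ → E is continuous on [0, T], that f(t) + κ f'(t) = g(t) for every t ∈ [0, T], and that ‖g(t)‖ ≤ B for every t ∈ [0, T]. Then ‖f(t)‖ ≤ max(‖f(0)‖, B) for every t ∈ [0, T]. -/
/-- **Lemma 2.5** (Section 2.5.3), with sharp constant `C = 1`: if
`f + κ • f' = g` on `[0, T]` with `κ > 0` and `‖g‖ ≤ B` on `[0, T]`, then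
`‖f t‖ ≤ max ‖f 0‖ B` on `[0, T]`. -/
theorem f_plus_kappa_ft_estimate
    {E : Type*} [NormedAddCommGroup E] [NormedSpace ℝ E] [CompleteSpace E]
    (κ T B : ℝ) (hκ : 0 < κ) (hT : 0 ≤ T) (hB : 0 ≤ B)
    (f f' g : ℝ → E)
    (hf : ∀ t ∈ Set.Icc (0 : ℝ) T, HasDerivAt f (f' t) t)
    (hg : ContinuousOn g (Set.Icc (0 : ℝ) T))
    (heq : ∀ t ∈ Set.Icc (0 : ℝ) T, f t + κ • f' t = g t)
    (hgB : ∀ t ∈ Set.Icc (0 : ℝ) T, ‖g t‖ ≤ B) :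
    ∀ t ∈ Set.Icc (0 : ℝ) T, ‖f t‖ ≤ max ‖f 0‖ B := by
  intro t ht
  obtain ⟨ht0, htT⟩ := ht
  have hκ' : κ ≠ 0 := ne_of_gt hκ
  set M := max ‖f 0‖ B with hM
  have hsub : Set.Icc (0:ℝ) t ⊆ Set.Icc 0 T := Set.Icc_subset_Icc le_rfl htT
  have hexp : ∀ s : ℝ, HasDerivAt (fun s => Real.exp (s/κ)) (Real.exp (s/κ)/κ) s := by
    intro s
    have := (Real.hasDerivAt_exp (s/κ)).comp s ((hasDerivAt_id s).div_const κ)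
    simpa [div_eq_mul_inv, mul_comm, Function.comp_def] using this
  have hh : ∀ s ∈ Set.Icc (0:ℝ) t, HasDerivAt (fun s => Real.exp (s/κ) • f s)
      ((Real.exp (s/κ)/κ) • g s) s := by
    intro s hs
    have hd := (hexp s).smul (hf s (hsub hs))
    have hgs : (Real.exp (s/κ)/κ) • g s
        = (Real.exp (s/κ)/κ) • f s + Real.exp (s/κ) • f' s := by
      rw [← heq s (hsub hs), smul_add, smul_smul, div_mul_cancel₀ _ hκ']
    rw [hgs]
    convert hd using 1
    abel
    rw [add_comm]
  have hcont : ContinuousOn (fun s => (Real.exp (s/κ)/κ) • g s) (Set.Icc (0:ℝ) t) :=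
    (((Real.continuous_exp.comp (continuous_id.div_const κ)).div_const κ).continuousOn).smul
      (hg.mono hsub)
  have hint : ∫ s in (0:ℝ)..t, (Real.exp (s/κ)/κ) • g s
      = Real.exp (t/κ) • f t - Real.exp (0/κ) • f 0 := by
    apply intervalIntegral.integral_eq_sub_of_hasDerivAt
    · intro s hs
      exact hh s (by rwa [Set.uIcc_of_le ht0] at hs)
    · exact (hcont.mono (by rw [Set.uIcc_of_le ht0])).intervalIntegrable
  have hexpint : ∫ s in (0:ℝ)..t, (Real.exp (s/κ)/κ) * B
      = Real.exp (t/κ) * B - Real.exp (0/κ) * B := by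
    apply intervalIntegral.integral_eq_sub_of_hasDerivAt
    · intro s hs
      exact (hexp s).mul_const B
    · apply ContinuousOn.intervalIntegrable
      exact ((Real.continuous_exp.comp (continuous_id.div_const κ)).div_const κ).continuousOn.mul
        continuousOn_const
  have hnorm : ‖∫ s in (0:ℝ)..t, (Real.exp (s/κ)/κ) • g s‖
      ≤ Real.exp (t/κ) * B - Real.exp (0/κ) * B := by
    rw [← hexpint]
    calc ‖∫ s in (0:ℝ)..t, (Real.exp (s/κ)/κ) • g s‖
        ≤ ∫ s in (0:ℝ)..t, ‖(Real.exp (s/κ)/κ) • g s‖ :=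
          intervalIntegral.norm_integral_le_integral_norm ht0
      _ ≤ ∫ s in (0:ℝ)..t, Real.exp (s/κ)/κ * B := by
          apply intervalIntegral.integral_mono_on ht0
          · exact (hcont.norm.mono (by rw [Set.uIcc_of_le ht0])).intervalIntegrable
          · apply ContinuousOn.intervalIntegrable
            exact ((Real.continuous_exp.comp (continuous_id.div_const κ)).div_const
              κ).continuousOn.mul continuousOn_const
          · intro s hs
            rw [norm_smul, Real.norm_eq_abs, abs_of_pos (div_pos (Real.exp_pos _) hκ)]
            exact mul_le_mul_of_nonneg_left (hgB s (hsub hs))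
              (le_of_lt (div_pos (Real.exp_pos _) hκ))
  have he1 : (1:ℝ) ≤ Real.exp (t/κ) := Real.one_le_exp (div_nonneg ht0 hκ.le)
  have hkey : Real.exp (t/κ) * ‖f t‖ ≤ ‖f 0‖ + (Real.exp (t/κ) * B - B) := by
    have : ‖Real.exp (t/κ) • f t‖ ≤ ‖Real.exp (0/κ) • f 0‖
        + (Real.exp (t/κ) * B - Real.exp (0/κ) * B) := by
      calc ‖Real.exp (t/κ) • f t‖
          = ‖Real.exp (0/κ) • f 0 + ∫ s in (0:ℝ)..t, (Real.exp (s/κ)/κ) • g s‖ := by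
            rw [hint]; congr 1; abel
        _ ≤ _ := by exact (norm_add_le _ _).trans (by gcongr)
    simpa [norm_smul, Real.norm_eq_abs, abs_of_pos (Real.exp_pos _), Real.exp_zero] using this
  have h0M : ‖f 0‖ ≤ M := le_max_left _ _
  have hBM : B ≤ M := le_max_right _ _
  nlinarith [norm_nonneg (f t), Real.exp_pos (t/κ)]
end

section
/- Let n be a natural number, let M : ℝ → Matrix (Fin n) (Fin n) ℝ have derivative M' at t₀ (entrywise), and suppose det(M(t₀)) ≠ 0. Then the map t ↦ adjugate(M(t)) has derivative at t₀ equal to (det M(t₀))⁻¹ • ( trace(adjugate(M(t₀)) * M') • adjugate(M(t₀)) − adjugate(M(t₀)) * M' * adjugate(M(t₀)) ). -/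
open Matrix Finset

/-- Jacobi's formula along a curve: derivative of `det ∘ M`. -/
theorem hasDerivAt_det_of_hasDerivAt_entries_aux
    {n : ℕ} (M : ℝ → Matrix (Fin n) (Fin n) ℝ) (M' : Matrix (Fin n) (Fin n) ℝ)
    (t₀ : ℝ) (hM : ∀ i j, HasDerivAt (fun t => M t i j) (M' i j) t₀) :
    HasDerivAt (fun t => (M t).det) (Matrix.trace ((M t₀).adjugate * M')) t₀ := by
  have key : HasDerivAt (fun t => ∑ σ : Equiv.Perm (Fin n),
      ((Equiv.Perm.sign σ : ℤ) : ℝ) * ∏ i, M t (σ i) i)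
      (∑ σ : Equiv.Perm (Fin n), ((Equiv.Perm.sign σ : ℤ) : ℝ) *
        ∑ j, (∏ i ∈ Finset.univ.erase j, M t₀ (σ i) i) • M' (σ j) j) t₀ := by
    refine HasDerivAt.fun_sum fun σ _ => ?_
    exact (HasDerivAt.fun_finsetProd (fun i _ => hM (σ i) i)).const_mul _
  have hfun : (fun t => (M t).det) = fun t => ∑ σ : Equiv.Perm (Fin n),
      ((Equiv.Perm.sign σ : ℤ) : ℝ) * ∏ i, M t (σ i) i := by
    funext t; rw [Matrix.det_apply']
  have hval : Matrix.trace ((M t₀).adjugate * M') =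
      ∑ σ : Equiv.Perm (Fin n), ((Equiv.Perm.sign σ : ℤ) : ℝ) *
        ∑ j, (∏ i ∈ Finset.univ.erase j, M t₀ (σ i) i) • M' (σ j) j := by
    have e1 : ∀ σ : Equiv.Perm (Fin n),
        ((Equiv.Perm.sign σ : ℤ) : ℝ) *
          ∑ j, (∏ i ∈ Finset.univ.erase j, M t₀ (σ i) i) • M' (σ j) j
        = ∑ j, ((Equiv.Perm.sign σ : ℤ) : ℝ) *
          ∏ i, ((M t₀).updateCol j (fun r => M' r j)) (σ i) i := by
      intro σ
      rw [Finset.mul_sum]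
      refine Finset.sum_congr rfl fun j _ => ?_
      congr 1
      simp only [Matrix.updateCol_apply]
      rw [← Finset.mul_prod_erase Finset.univ _ (Finset.mem_univ j), if_pos rfl,
        smul_eq_mul, mul_comm]
      congr 1
      refine Finset.prod_congr rfl fun i hi => ?_
      rw [if_neg (Finset.ne_of_mem_erase hi)]
    rw [Finset.sum_congr rfl fun σ _ => e1 σ, Finset.sum_comm]
    refine (Finset.sum_congr rfl fun j _ => ?_)
    rw [← Matrix.det_apply', ← Matrix.cramer_apply,
      Matrix.cramer_eq_adjugate_mulVec]
    simp [Matrix.mulVec, Matrix.mul_apply, Matrix.trace, dotProduct]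
  rw [hfun, hval]; exact key

/-- **Differentiation of the cofactor (adjugate) matrix** (formula (2.13),
Section 2.2.2): if `t ↦ M t` has entrywise derivative `M'` at `t₀` and
`det (M t₀) ≠ 0`, then `t ↦ adjugate (M t)` has entrywise derivative
`(det (M t₀))⁻¹ • (trace (adjugate (M t₀) * M') • adjugate (M t₀)
  - adjugate (M t₀) * M' * adjugate (M t₀))` at `t₀`. -/
theorem hasDerivAt_adjugate_of_hasDerivAt_entries
    (n : ℕ) (M : ℝ → Matrix (Fin n) (Fin n) ℝ) (M' : Matrix (Fin n) (Fin n) ℝ)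
    (t₀ : ℝ)
    (hM : ∀ i j, HasDerivAt (fun t => M t i j) (M' i j) t₀)
    (hdet : (M t₀).det ≠ 0) :
    ∀ i j, HasDerivAt (fun t => (M t).adjugate i j)
      (((M t₀).det⁻¹ •
        (Matrix.trace ((M t₀).adjugate * M') • (M t₀).adjugate
          - (M t₀).adjugate * M' * (M t₀).adjugate)) i j) t₀ := by
  -- the adjugate entries are differentiable (with some derivative)
  have hadj : ∀ i j, HasDerivAt (fun t => (M t).adjugate i j)
      (Matrix.trace ((((M t₀).updateRow j (Pi.single i 1)).adjugate) *
        (M'.updateRow j 0))) t₀ := by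
    intro i j
    have hN : ∀ a b, HasDerivAt (fun t => ((M t).updateRow j (Pi.single i 1)) a b)
        ((M'.updateRow j 0) a b) t₀ := by
      intro a b
      by_cases hab : a = j
      · subst hab
        simp only [Matrix.updateRow_self, Pi.zero_apply]
        exact hasDerivAt_const t₀ _
      · simp only [Matrix.updateRow_ne hab]
        exact hM a b
    have h := hasDerivAt_det_of_hasDerivAt_entries_aux
      (fun t => (M t).updateRow j (Pi.single i 1)) (M'.updateRow j 0) t₀ hN
    simpa only [← Matrix.adjugate_apply] using h
  set A' : Matrix (Fin n) (Fin n) ℝ := Matrix.of fun i j =>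
    Matrix.trace ((((M t₀).updateRow j (Pi.single i 1)).adjugate) *
      (M'.updateRow j 0)) with hA'def
  have hadj' : ∀ i j, HasDerivAt (fun t => (M t).adjugate i j) (A' i j) t₀ := fun i j =>
    hadj i j
  -- differentiate the identity `adjugate (M t) * M t = det (M t) • 1`
  have hident : A' * M t₀ + (M t₀).adjugate * M' =
      Matrix.trace ((M t₀).adjugate * M') • (1 : Matrix (Fin n) (Fin n) ℝ) := by
    ext i j
    have h1 : HasDerivAt (fun t => ((M t).adjugate * M t) i j)
        ((A' * M t₀ + (M t₀).adjugate * M') i j) t₀ := by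
      have : ∀ t, ((M t).adjugate * M t) i j = ∑ k, (M t).adjugate i k * M t k j := by
        intro t; rw [Matrix.mul_apply]
      simp only [this]
      have := HasDerivAt.fun_sum (u := Finset.univ)
        (A := fun k t => (M t).adjugate i k * M t k j)
        (A' := fun k => A' i k * M t₀ k j + (M t₀).adjugate i k * M' k j)
        (fun k _ => (hadj' i k).mul (hM k j))
      convert this using 1
      · rfl
      · rfl
      simp [Matrix.add_apply, Matrix.mul_apply, Finset.sum_add_distrib]
    have h2 : HasDerivAt (fun t => ((M t).adjugate * M t) i j)
        ((Matrix.trace ((M t₀).adjugate * M') •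
          (1 : Matrix (Fin n) (Fin n) ℝ)) i j) t₀ := by
      have heq : (fun t => ((M t).adjugate * M t) i j)
          = fun t => (M t).det * (1 : Matrix (Fin n) (Fin n) ℝ) i j := by
        funext t; rw [Matrix.adjugate_mul, Matrix.smul_apply, smul_eq_mul]
      rw [heq]
      have := (hasDerivAt_det_of_hasDerivAt_entries_aux M M' t₀ hM).mul_const
        ((1 : Matrix (Fin n) (Fin n) ℝ) i j)
      simpa using this
    exact h1.unique h2
  -- solve for A'
  have hinv : M t₀ * ((M t₀).det⁻¹ • (M t₀).adjugate) = 1 := by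
    rw [Matrix.mul_smul, Matrix.mul_adjugate, smul_smul,
      inv_mul_cancel₀ hdet, one_smul]
  have hAM : A' * M t₀ = Matrix.trace ((M t₀).adjugate * M') •
      (1 : Matrix (Fin n) (Fin n) ℝ) - (M t₀).adjugate * M' := by
    rw [← hident]; abel
  have hA' : A' = (M t₀).det⁻¹ •
      (Matrix.trace ((M t₀).adjugate * M') • (M t₀).adjugate
        - (M t₀).adjugate * M' * (M t₀).adjugate) := by
    calc A' = A' * (M t₀ * ((M t₀).det⁻¹ • (M t₀).adjugate)) := by
          rw [hinv, mul_one]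
      _ = (A' * M t₀) * ((M t₀).det⁻¹ • (M t₀).adjugate) := by rw [mul_assoc]
      _ = _ := by
          rw [hAM, Matrix.mul_smul, sub_mul, Matrix.smul_mul, one_mul]
  intro i j
  rw [← hA']
  exact hadj' i j
end
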